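/- Suppose σ(x)² = 2x² for all |x| < δ for some δ > 0. Then V(x) = ln ln(1/|x| + e) satisfies L V(x) = [ |x|²(1+e|x|) ln(1/|x|+e) + e|x| ln(1/|x|+e) − 1 ] / [ (1+e|x|)² ln²(1/|x|+e) ], and there exists 0 < ε < δ such that L V(x) ≤ 0 for all 0 < |x| < ε. -/

import Mathlib

open Real Filter Set

noncomputable def g1 (x : ℝ) : ℝ :=
  -((x + Real.exp 1 * x ^ 2) * Real.log (1 / x + Real.exp 1))⁻¹

noncomputable def g2 (x : ℝ) : ℝ :=
  ((1 + 2 * Real.exp 1 * x) * Real.log (1 / x + Real.exp 1) - 1) /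
    ((x + Real.exp 1 * x ^ 2) ^ 2 * (Real.log (1 / x + Real.exp 1)) ^ 2)

lemma arg_pos {x : ℝ} (hx : 0 < x) : 0 < 1 / x + Real.exp 1 := by positivity

lemma L_pos {x : ℝ} (hx : 0 < x) : 0 < Real.log (1 / x + Real.exp 1) := by
  apply Real.log_pos
  nlinarith [Real.exp_one_gt_d9, one_div_pos.mpr hx]

lemma hasDerivV {x : ℝ} (hx : 0 < x) :
    HasDerivAt (fun y : ℝ => Real.log (Real.log (1 / y + Real.exp 1))) (g1 x) x := by
  have h1 : HasDerivAt (fun y : ℝ => 1 / y + Real.exp 1) (-(x ^ 2)⁻¹) x := by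
    simpa [one_div] using (hasDerivAt_inv hx.ne').add_const (Real.exp 1)
  have h3 := (h1.log (arg_pos hx).ne').log (L_pos hx).ne'
  convert h3 using 1
  unfold g1
  set L := Real.log (1 / x + Real.exp 1) with hLdef
  have hL : L ≠ 0 := (L_pos hx).ne'
  have ha : 1 / x + Real.exp 1 ≠ 0 := (arg_pos hx).ne'
  have hx' : x ≠ 0 := hx.ne'
  field_simp

lemma hasDerivg1 {x : ℝ} (hx : 0 < x) : HasDerivAt g1 (g2 x) x := by
  have h1 : HasDerivAt (fun y : ℝ => 1 / y + Real.exp 1) (-(x ^ 2)⁻¹) x := by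
    simpa [one_div] using (hasDerivAt_inv hx.ne').add_const (Real.exp 1)
  have h2 := h1.log (arg_pos hx).ne'
  have hp : HasDerivAt (fun y : ℝ => y + Real.exp 1 * y ^ 2)
      (1 + 2 * Real.exp 1 * x) x := by
    have h := (hasDerivAt_id x).add ((hasDerivAt_pow 2 x).const_mul (Real.exp 1))
    refine h.congr_deriv ?_
    simp; ring
  have hP := hp.mul h2
  have hPx : (x + Real.exp 1 * x ^ 2) * Real.log (1 / x + Real.exp 1) ≠ 0 := by
    have h1 := L_pos hx
    have h0 : 0 < x + Real.exp 1 * x ^ 2 := by positivity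
    positivity
  have h := (hP.inv hPx).neg
  refine h.congr_deriv ?_
  unfold g2
  set L := Real.log (1 / x + Real.exp 1) with hLdef
  have hL : L ≠ 0 := (L_pos hx).ne'
  have ha : 1 / x + Real.exp 1 ≠ 0 := (arg_pos hx).ne'
  have hx' : x ≠ 0 := hx.ne'
  have hE : 0 < Real.exp 1 := Real.exp_pos 1
  have h0 : x + Real.exp 1 * x ^ 2 ≠ 0 := by positivity
  have key : (x + Real.exp 1 * x ^ 2) * (-(x ^ 2)⁻¹ / (1 / x + Real.exp 1)) = -1 := by
    field_simp
  rw [key]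
  show -(-((1 + 2 * Real.exp 1 * x) * L + -1) / ((x + Real.exp 1 * x ^ 2) * L) ^ 2) = _
  rw [show -(-((1 + 2 * Real.exp 1 * x) * L + -1) / ((x + Real.exp 1 * x ^ 2) * L) ^ 2)
      = ((1 + 2 * Real.exp 1 * x) * L - 1) / ((x + Real.exp 1 * x ^ 2) * L) ^ 2 by ring]
  rw [mul_pow]

lemma key_alg {t : ℝ} (ht : 0 < t) :
    (-t ^ 3 + t) * g1 t + t ^ 2 * g2 t
      = (t ^ 2 * (1 + Real.exp 1 * t) * Real.log (1 / t + Real.exp 1)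
          + Real.exp 1 * t * Real.log (1 / t + Real.exp 1) - 1)
        / ((1 + Real.exp 1 * t) ^ 2 * (Real.log (1 / t + Real.exp 1)) ^ 2) := by
  unfold g1 g2
  set L := Real.log (1 / t + Real.exp 1) with hLdef
  have hL : L ≠ 0 := (L_pos ht).ne'
  have hE : 0 < Real.exp 1 := Real.exp_pos 1
  have h1 : (0:ℝ) < 1 + Real.exp 1 * t := by positivity
  have ht' : t ≠ 0 := ht.ne'
  have h0 : t + Real.exp 1 * t ^ 2 ≠ 0 := by positivity
  field_simp
  ring

lemma derivV_eq {t : ℝ} (ht : 0 < t) :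
    deriv (fun y : ℝ => Real.log (Real.log (1 / |y| + Real.exp 1))) t = g1 t := by
  have hE : (fun y : ℝ => Real.log (Real.log (1 / |y| + Real.exp 1)))
      =ᶠ[nhds t] (fun y : ℝ => Real.log (Real.log (1 / y + Real.exp 1))) :=
    Filter.eventuallyEq_of_mem (isOpen_Ioi.mem_nhds ht)
      (fun y hy => by rw [abs_of_pos hy])
  rw [hE.deriv_eq, (hasDerivV ht).deriv]

lemma deriv2V_eq {t : ℝ} (ht : 0 < t) :
    deriv (deriv (fun y : ℝ => Real.log (Real.log (1 / |y| + Real.exp 1)))) t = g2 t := by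
  have hE : deriv (fun y : ℝ => Real.log (Real.log (1 / |y| + Real.exp 1)))
      =ᶠ[nhds t] g1 :=
    Filter.eventuallyEq_of_mem (isOpen_Ioi.mem_nhds ht)
      (fun y hy => derivV_eq hy)
  rw [hE.deriv_eq, (hasDerivg1 ht).deriv]

lemma derivV_eq_neg {x : ℝ} (hx : x < 0) :
    deriv (fun y : ℝ => Real.log (Real.log (1 / |y| + Real.exp 1))) x = -g1 (-x) := by
  have hVe : (fun y : ℝ => Real.log (Real.log (1 / |(-y)| + Real.exp 1)))
      = (fun y : ℝ => Real.log (Real.log (1 / |y| + Real.exp 1))) := by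
    funext y; rw [abs_neg]
  rw [← hVe]
  rw [deriv_comp_neg (fun y : ℝ => Real.log (Real.log (1 / |y| + Real.exp 1))) x]
  rw [derivV_eq (by linarith : 0 < -x)]

lemma deriv2V_eq_neg {x : ℝ} (hx : x < 0) :
    deriv (deriv (fun y : ℝ => Real.log (Real.log (1 / |y| + Real.exp 1)))) x = g2 (-x) := by
  have hW : deriv (fun y : ℝ => Real.log (Real.log (1 / |y| + Real.exp 1)))
      =ᶠ[nhds x] (fun y : ℝ => -g1 (-y)) :=
    Filter.eventuallyEq_of_mem (isOpen_Iio.mem_nhds hx)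
      (fun y hy => derivV_eq_neg hy)
  rw [hW.deriv_eq, deriv.fun_neg, deriv_comp_neg g1 x, neg_neg, (hasDerivg1 (by linarith)).deriv]

lemma tendsto_mul_logpart :
    Filter.Tendsto (fun t : ℝ => t * Real.log (1 / t + Real.exp 1))
      (nhdsWithin 0 (Set.Ioi 0)) (nhds 0) := by
  apply squeeze_zero'
  · filter_upwards [self_mem_nhdsWithin] with t ht
    exact mul_nonneg (le_of_lt ht) (L_pos ht).le
  · filter_upwards [Ioo_mem_nhdsGT_of_mem (Set.mem_Ico.mpr ⟨le_refl (0:ℝ), one_pos⟩)]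
      with t ht
    obtain ⟨ht0, ht1⟩ := ht
    have hE : (0:ℝ) < Real.exp 1 := Real.exp_pos 1
    have harg : 1 / t + Real.exp 1 ≤ (1 + Real.exp 1) / t := by
      rw [add_div]
      have : Real.exp 1 ≤ Real.exp 1 / t := by
        rw [le_div_iff₀ ht0]; nlinarith
      linarith
    have hlog : Real.log (1 / t + Real.exp 1) ≤ Real.log (1 + Real.exp 1) - Real.log t := by
      calc Real.log (1 / t + Real.exp 1) ≤ Real.log ((1 + Real.exp 1) / t) :=
            Real.log_le_log (arg_pos ht0) harg
        _ = Real.log (1 + Real.exp 1) - Real.log t :=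
            Real.log_div (by positivity) ht0.ne'
    calc t * Real.log (1 / t + Real.exp 1)
        ≤ t * (Real.log (1 + Real.exp 1) - Real.log t) :=
          mul_le_mul_of_nonneg_left hlog ht0.le
      _ = t * Real.log (1 + Real.exp 1) - t * Real.log t := by ring
  · have h1 : Filter.Tendsto (fun t : ℝ => t * Real.log (1 + Real.exp 1))
        (nhdsWithin 0 (Set.Ioi 0)) (nhds 0) := by
      have h : Filter.Tendsto (fun t : ℝ => t * Real.log (1 + Real.exp 1))
          (nhds 0) (nhds (0 * Real.log (1 + Real.exp 1))) :=
        (continuous_id.mul continuous_const).tendsto (0:ℝ)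
      simpa using h.mono_left (nhdsWithin_le_nhds (s := Set.Ioi (0:ℝ)))
    have h2 : Filter.Tendsto (fun t : ℝ => t * Real.log t)
        (nhdsWithin 0 (Set.Ioi 0)) (nhds 0) := by
      have := (Real.continuous_mul_log.tendsto (0:ℝ)).mono_left
        (nhdsWithin_le_nhds (s := Set.Ioi (0:ℝ)))
      simpa using this
    simpa using h1.sub h2

lemma part2 (δ : ℝ) (hδ : 0 < δ) :
    ∃ ε : ℝ, 0 < ε ∧ ε < δ ∧ ∀ x : ℝ, 0 < |x| → |x| < ε →
      (x ^ 2 * (1 + Real.exp 1 * |x|) * Real.log (1 / |x| + Real.exp 1)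
          + Real.exp 1 * |x| * Real.log (1 / |x| + Real.exp 1) - 1)
        / ((1 + Real.exp 1 * |x|) ^ 2 * (Real.log (1 / |x| + Real.exp 1)) ^ 2) ≤ 0 := by
  have h2 : Filter.Tendsto (fun t : ℝ => t * (1 + Real.exp 1 * t) + Real.exp 1)
      (nhdsWithin 0 (Set.Ioi 0)) (nhds (Real.exp 1)) := by
    have hc : Continuous (fun t : ℝ => t * (1 + Real.exp 1 * t) + Real.exp 1) := by
      continuity
    have h := (hc.tendsto (0:ℝ)).mono_left (nhdsWithin_le_nhds (s := Set.Ioi (0:ℝ)))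
    simpa using h
  have hprod : Filter.Tendsto
      (fun t : ℝ => (t ^ 2 * (1 + Real.exp 1 * t) + Real.exp 1 * t)
        * Real.log (1 / t + Real.exp 1))
      (nhdsWithin 0 (Set.Ioi 0)) (nhds 0) := by
    have := h2.mul tendsto_mul_logpart
    rw [mul_zero] at this
    exact this.congr (fun t => by ring)
  have hev : ∀ᶠ t in nhdsWithin (0:ℝ) (Set.Ioi 0),
      (t ^ 2 * (1 + Real.exp 1 * t) + Real.exp 1 * t)
        * Real.log (1 / t + Real.exp 1) < 1 :=
    hprod.eventually (Filter.Tendsto.eventually_lt_const (by norm_num) tendsto_id)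
  obtain ⟨u, hu, hsub⟩ := mem_nhdsGT_iff_exists_Ioo_subset.mp hev
  have hu0 : 0 < u := hu
  refine ⟨min (u / 2) (δ / 2), lt_min (by positivity) (by positivity), ?_, ?_⟩
  · calc min (u / 2) (δ / 2) ≤ δ / 2 := min_le_right _ _
      _ < δ := by linarith
  · intro x hx0 hxe
    set t := |x| with htdef
    have ht : t ∈ Set.Ioo (0:ℝ) u := by
      constructor
      · exact hx0
      · have := lt_of_lt_of_le hxe (min_le_left _ _)
        linarith
    have hN := hsub ht
    simp only [Set.mem_setOf_eq] at hN
    have hx2 : x ^ 2 = t ^ 2 := (sq_abs x).symm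
    apply div_nonpos_of_nonpos_of_nonneg
    · rw [hx2]; nlinarith [hN]
    · positivity



/-- If `σ(x)² = 2x²` for `|x| < δ`, then `V x = ln ln (1/|x| + e)` satisfies the stated
formula for `L V` on `0 < |x| < δ`, and there is `0 < ε < δ` with `L V(x) ≤ 0` for
`0 < |x| < ε`. -/
theorem stmt_8 (σ : ℝ → ℝ) (δ : ℝ) (hδ : 0 < δ)
    (hσ : ∀ x : ℝ, |x| < δ → (σ x) ^ 2 = 2 * x ^ 2) :
    (∀ x : ℝ, 0 < |x| → |x| < δ →
      (-x ^ 3 + x) * deriv (fun y : ℝ => Real.log (Real.log (1 / |y| + Real.exp 1))) x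
        + (σ x) ^ 2 / 2
          * deriv (deriv (fun y : ℝ => Real.log (Real.log (1 / |y| + Real.exp 1)))) x
      = (x ^ 2 * (1 + Real.exp 1 * |x|) * Real.log (1 / |x| + Real.exp 1)
          + Real.exp 1 * |x| * Real.log (1 / |x| + Real.exp 1) - 1)
        / ((1 + Real.exp 1 * |x|) ^ 2 * (Real.log (1 / |x| + Real.exp 1)) ^ 2)) ∧
    ∃ ε : ℝ, 0 < ε ∧ ε < δ ∧ ∀ x : ℝ, 0 < |x| → |x| < ε →
      (x ^ 2 * (1 + Real.exp 1 * |x|) * Real.log (1 / |x| + Real.exp 1)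
          + Real.exp 1 * |x| * Real.log (1 / |x| + Real.exp 1) - 1)
        / ((1 + Real.exp 1 * |x|) ^ 2 * (Real.log (1 / |x| + Real.exp 1)) ^ 2) ≤ 0 := by
  constructor
  · intro x hx0 hxδ
    have hσ2 : (σ x) ^ 2 / 2 = x ^ 2 := by rw [hσ x hxδ]; ring
    rw [hσ2]
    rcases lt_trichotomy x 0 with hx | hx | hx
    · rw [derivV_eq_neg hx, deriv2V_eq_neg hx, abs_of_neg hx]
      have ht : 0 < -x := by linarith
      have := key_alg ht
      have hx2 : x ^ 2 = (-x) ^ 2 := by ring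
      rw [hx2]
      rw [← this]
      ring
    · simp [hx] at hx0
    · rw [derivV_eq hx, deriv2V_eq hx, abs_of_pos hx]
      exact key_alg hx
  · exact part2 δ hδ
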